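/- arXiv:1810.08736 — 4 statements merged into one kernel-verified Lean document; each statement's English description precedes it below -/
import Mathlib

section
/- Let A be a complete Noetherian local commutative ring with maximal ideal m, and let M be a finitely generated A-module. For each n ≥ 1 set M_n = M/m^n M, and let G_n denote the group of A-module automorphisms of M_n; every A-module automorphism of M_{n+1} preserves the submodule m^n M_{n+1} and hence induces an A-module automorphism of M_n, giving transition group homomorphisms G_{n+1} → G_n. Then the inverse system (G_n)_{n ≥ 1} satisfies the Mittag-Leffler condition: for every n ≥ 1 there exists N ≥ n such that for all i, j ≥ N the image of G_i in G_n (under the composite transition maps) coincides with the image of G_j in G_n. -/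
/-- The natural projection `M/m^i M → M/m^n M` for `n ≤ i`. -/
noncomputable def quotProj {A : Type*} [CommRing A] (I : Ideal A)
    (M : Type*) [AddCommGroup M] [Module A M] {n i : ℕ} (h : n ≤ i) :
    (M ⧸ (I ^ i • ⊤ : Submodule A M)) →ₗ[A] (M ⧸ (I ^ n • ⊤ : Submodule A M)) :=
  Submodule.mapQ _ _ LinearMap.id (by
    rw [Submodule.comap_id]
    exact Submodule.smul_mono_left (Ideal.pow_le_pow_right h))

/-- The image of `G_i = Aut_A(M/m^i M)` in `G_n = Aut_A(M/m^n M)` under the composite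
transition maps: an automorphism `φ` of `M/m^n M` lies in this image iff it is induced by
some automorphism `ψ` of `M/m^i M`, i.e. `φ ∘ proj = proj ∘ ψ`. -/
def autImage {A : Type*} [CommRing A] (I : Ideal A)
    (M : Type*) [AddCommGroup M] [Module A M] {n i : ℕ} (h : n ≤ i) :
    Set ((M ⧸ (I ^ n • ⊤ : Submodule A M)) ≃ₗ[A] (M ⧸ (I ^ n • ⊤ : Submodule A M))) :=
  {φ | ∃ ψ : (M ⧸ (I ^ i • ⊤ : Submodule A M)) ≃ₗ[A] (M ⧸ (I ^ i • ⊤ : Submodule A M)),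
    ∀ x : M ⧸ (I ^ i • ⊤ : Submodule A M), φ (quotProj I M h x) = quotProj I M h (ψ x)}

section Aux

variable {A : Type*} [CommRing A] {M : Type*} [AddCommGroup M] [Module A M]

lemma quotProj_mk (I : Ideal A) {n i : ℕ} (h : n ≤ i) (x : M) :
    quotProj I M h (Submodule.Quotient.mk x :  M ⧸ (I ^ i • ⊤ : Submodule A M)) =
      (Submodule.Quotient.mk x : M ⧸ (I ^ n • ⊤ : Submodule A M)) := by
  simp [quotProj, Submodule.mapQ_apply]

lemma quotProj_mkQ (I : Ideal A) {n i : ℕ} (h : n ≤ i) (x : M) :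
    quotProj I M h ((I ^ i • ⊤ : Submodule A M).mkQ x) =
      (I ^ n • ⊤ : Submodule A M).mkQ x := quotProj_mk I h x

lemma quotProj_quotProj (I : Ideal A) {n i j : ℕ} (h1 : n ≤ i) (h2 : i ≤ j)
    (x : M ⧸ (I ^ j • ⊤ : Submodule A M)) :
    quotProj I M h1 (quotProj I M h2 x) = quotProj I M (h1.trans h2) x := by
  obtain ⟨y, rfl⟩ := Submodule.mkQ_surjective _ x
  simp [quotProj_mk, quotProj_mkQ, Submodule.mkQ_apply]

/-- In `M / I^n M`, the submodule `J • ⊤` is trivial whenever `J ≤ I^n`. -/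
lemma smul_top_quot_eq_bot (I : Ideal A) (n : ℕ) {J : Ideal A} (hJ : J ≤ I ^ n) :
    (J • ⊤ : Submodule A (M ⧸ (I ^ n • ⊤ : Submodule A M))) = ⊥ := by
  have h1 : (⊤ : Submodule A (M ⧸ (I ^ n • ⊤ : Submodule A M))) =
      Submodule.map (I ^ n • ⊤ : Submodule A M).mkQ ⊤ := by
    rw [Submodule.map_top, Submodule.range_mkQ]
  rw [h1, ← Submodule.map_smul'', eq_bot_iff, Submodule.map_le_iff_le_comap,
    Submodule.comap_bot, Submodule.ker_mkQ]
  exact Submodule.smul_mono_left hJ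

lemma ker_quotProj_le (I : Ideal A) {n i : ℕ} (h : n ≤ i) :
    LinearMap.ker (quotProj I M h) ≤
      (I ^ n • ⊤ : Submodule A (M ⧸ (I ^ i • ⊤ : Submodule A M))) := by
  intro x hx
  obtain ⟨y, rfl⟩ := Submodule.mkQ_surjective _ x
  rw [LinearMap.mem_ker, quotProj_mkQ] at hx
  have hy : y ∈ (I ^ n • ⊤ : Submodule A M) := by
    rwa [Submodule.mkQ_apply, Submodule.Quotient.mk_eq_zero] at hx
  have : (I ^ i • ⊤ : Submodule A M).mkQ y ∈
      Submodule.map (I ^ i • ⊤ : Submodule A M).mkQ (I ^ n • ⊤ : Submodule A M) :=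
    Submodule.mem_map_of_mem hy
  rw [Submodule.map_smul''] at this
  exact Submodule.smul_mono le_rfl le_top this

variable [IsNoetherianRing A] [Module.Finite A M]

/-- `M / I^n M` is an Artinian `A`-module when `I` is maximal. -/
lemma isArtinian_quot (I : Ideal A) [I.IsMaximal] :
    ∀ n : ℕ, IsArtinian A (M ⧸ (I ^ n • ⊤ : Submodule A M)) := by
  intro n
  induction n with
  | zero =>
      have : (I ^ 0 • ⊤ : Submodule A M) = ⊤ := by
        rw [pow_zero, Ideal.one_eq_top, Submodule.top_smul]
      haveI : Subsingleton (M ⧸ (I ^ 0 • ⊤ : Submodule A M)) :=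
        Submodule.Quotient.subsingleton_iff.2 this
      infer_instance
  | succ n ih =>
      set K := LinearMap.ker (quotProj I M (Nat.le_succ n)) with hK
      have htor : Module.IsTorsionBySet A K (I : Set A) := by
        intro k a
        apply Subtype.ext
        obtain ⟨y, hy⟩ := Submodule.mkQ_surjective _
          (k : M ⧸ (I ^ (n + 1) • ⊤ : Submodule A M))
        have hk := k.2
        rw [LinearMap.mem_ker, ← hy, quotProj_mkQ] at hk
        have hy' : y ∈ (I ^ n • ⊤ : Submodule A M) := by
          rwa [Submodule.mkQ_apply, Submodule.Quotient.mk_eq_zero] at hk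
        have hmem : (a : A) • y ∈ (I ^ (n + 1) • ⊤ : Submodule A M) := by
          rw [pow_succ', ← smul_eq_mul, Submodule.smul_assoc]
          exact Submodule.smul_mem_smul a.2 hy'
        show (a : A) • (k : M ⧸ (I ^ (n + 1) • ⊤ : Submodule A M)) = 0
        rw [← hy, ← map_smul, Submodule.mkQ_apply, Submodule.Quotient.mk_eq_zero]
        exact hmem
      letI : Module (A ⧸ I) K := htor.module
      letI : IsScalarTower A (A ⧸ I) K := htor.isScalarTower
      letI : Field (A ⧸ I) := Ideal.Quotient.field I
      haveI : Module.Finite A K := by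
        rw [Module.Finite.iff_fg]
        exact IsNoetherian.noetherian K
      haveI : Module.Finite (A ⧸ I) K := Module.Finite.of_restrictScalars_finite A _ _
      haveI : IsArtinian (A ⧸ I) K := isArtinian_of_fg_of_artinian' (R := A ⧸ I) (M := K)
      -- transfer Artinianness back to `A`: `A`-submodules of `K` are `A ⧸ I`-submodules
      let emb : Submodule A K ↪o Submodule (A ⧸ I) K :=
        { toFun := fun p =>
            { carrier := (p : Set K)
              add_mem' := fun h1 h2 => p.add_mem h1 h2
              zero_mem' := p.zero_mem
              smul_mem' := by
                rintro ⟨b⟩ x hx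
                exact p.smul_mem b hx }
          inj' := fun p q hpq => by
            apply SetLike.coe_injective
            have := congrArg (fun (r : Submodule (A ⧸ I) K) => (r : Set K)) hpq
            exact this
          map_rel_iff' := Iff.rfl }
      haveI hKart : IsArtinian A K := ⟨emb.wellFounded IsWellFounded.wf⟩
      haveI := ih
      exact isArtinian_of_range_eq_ker K.subtype (quotProj I M (Nat.le_succ n))
        (Submodule.range_subtype K)

/-- `Hom_A(M, M / I^n M)` is an Artinian `A`-module when `I` is maximal. -/
lemma isArtinian_hom (I : Ideal A) [I.IsMaximal] (n : ℕ) :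
    IsArtinian A (M →ₗ[A] M ⧸ (I ^ n • ⊤ : Submodule A M)) := by
  haveI := isArtinian_quot (M := M) I n
  obtain ⟨s, hs⟩ := (Module.Finite.fg_top : (⊤ : Submodule A M).FG)
  refine isArtinian_of_injective
    (LinearMap.pi fun i : s => LinearMap.applyₗ (i : M)) ?_
  intro f g hfg
  refine LinearMap.ext_on (s := (s : Set M)) hs ?_
  intro x hx
  have h2 := congrFun hfg (⟨x, hx⟩ : (s : Set M))
  simpa using h2

end Aux

/-- The image of `Hom(M, M/I^i M)` in `Hom(M, M/I^n M)`. -/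
noncomputable def homImage {A : Type*} [CommRing A] (I : Ideal A)
    (M : Type*) [AddCommGroup M] [Module A M] {n i : ℕ} (h : n ≤ i) :
    Submodule A (M →ₗ[A] (M ⧸ (I ^ n • ⊤ : Submodule A M))) :=
  LinearMap.range (LinearMap.llcomp (σ₁₂ := RingHom.id A) A M (M ⧸ (I ^ i • ⊤ : Submodule A M))
    (M ⧸ (I ^ n • ⊤ : Submodule A M)) (quotProj I M h))

section Aux2

variable {A : Type*} [CommRing A] {M : Type*} [AddCommGroup M] [Module A M]

lemma mem_homImage {I : Ideal A} {n i : ℕ} {h : n ≤ i}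
    {g : M →ₗ[A] (M ⧸ (I ^ n • ⊤ : Submodule A M))} :
    g ∈ homImage I M h ↔
      ∃ g' : M →ₗ[A] (M ⧸ (I ^ i • ⊤ : Submodule A M)), (quotProj I M h).comp g' = g := by
  simp [homImage, LinearMap.mem_range, LinearMap.llcomp_apply']

lemma homImage_le (I : Ideal A) {n i j : ℕ} (h1 : n ≤ i) (h2 : i ≤ j) :
    homImage I M (h1.trans h2) ≤ homImage I M h1 := by
  rintro g hg
  rw [mem_homImage] at hg ⊢
  obtain ⟨g', rfl⟩ := hg
  exact ⟨(quotProj I M h2).comp g', by ext x; simp [quotProj_quotProj]⟩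

variable [IsNoetherianRing A] [IsLocalRing A] [Module.Finite A M]

open IsLocalRing in
/-- The image of `Aut(M_i)` in `Aut(M_n)` is exactly the set of automorphisms `φ` of `M_n`
such that `φ ∘ π_n` lifts to a homomorphism `M → M_i`. -/
lemma autImage_eq {n i : ℕ} (hn : 1 ≤ n) (h : n ≤ i) :
    autImage (maximalIdeal A) M h =
      {φ | φ.toLinearMap ∘ₗ ((maximalIdeal A) ^ n • ⊤ : Submodule A M).mkQ ∈
        homImage (maximalIdeal A) M h} := by
  set I := maximalIdeal A with hI
  ext φ
  constructor
  · rintro ⟨ψ, hψ⟩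
    rw [Set.mem_setOf_eq, mem_homImage]
    refine ⟨ψ.toLinearMap ∘ₗ (I ^ i • ⊤ : Submodule A M).mkQ, ?_⟩
    ext x
    simp only [LinearMap.comp_apply, LinearEquiv.coe_coe]
    rw [← hψ, quotProj_mkQ]
  · rintro hφ
    rw [Set.mem_setOf_eq, mem_homImage] at hφ
    obtain ⟨g, hg⟩ := hφ
    -- `g` kills `I^i • ⊤`, so it factors through `M_i`.
    have hker : (I ^ i • ⊤ : Submodule A M) ≤ LinearMap.ker g := by
      intro x hx
      rw [LinearMap.mem_ker]
      have : g x ∈ Submodule.map g (I ^ i • ⊤ : Submodule A M) := Submodule.mem_map_of_mem hx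
      rw [Submodule.map_smul''] at this
      have h2 : (I ^ i • Submodule.map g ⊤ :
          Submodule A (M ⧸ (I ^ i • ⊤ : Submodule A M))) ≤ I ^ i • ⊤ :=
        Submodule.smul_mono le_rfl le_top
      have h3 := h2 this
      rw [smul_top_quot_eq_bot I i le_rfl] at h3
      simpa using h3
    set ψ' : (M ⧸ (I ^ i • ⊤ : Submodule A M)) →ₗ[A] (M ⧸ (I ^ i • ⊤ : Submodule A M)) :=
      Submodule.liftQ _ g hker with hψ'
    have hψ'apply : ∀ x : M, ψ' ((I ^ i • ⊤ : Submodule A M).mkQ x) = g x := fun x => rfl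
    have hgw : ∀ w : M, quotProj I M h (g w) = φ ((I ^ n • ⊤ : Submodule A M).mkQ w) := by
      intro w
      have := congrFun (congrArg DFunLike.coe hg) w
      simpa using this
    -- surjectivity of `ψ'` by Nakayama
    have hsurj : Function.Surjective ψ' := by
      rw [← LinearMap.range_eq_top]
      have hNN : (⊤ : Submodule A (M ⧸ (I ^ i • ⊤ : Submodule A M))) ≤
          LinearMap.range ψ' ⊔ I • ⊤ := by
        intro y _
        obtain ⟨x, rfl⟩ := Submodule.mkQ_surjective _ y
        obtain ⟨z, hz⟩ := φ.surjective ((I ^ n • ⊤ : Submodule A M).mkQ x)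
        obtain ⟨w, rfl⟩ := Submodule.mkQ_surjective _ z
        have hdiff : (I ^ i • ⊤ : Submodule A M).mkQ x - ψ' ((I ^ i • ⊤ : Submodule A M).mkQ w) ∈
            LinearMap.ker (quotProj I M h) := by
          rw [LinearMap.mem_ker, map_sub, quotProj_mkQ, hψ'apply, hgw, hz, sub_self]
        have hdiff' : (I ^ i • ⊤ : Submodule A M).mkQ x -
            ψ' ((I ^ i • ⊤ : Submodule A M).mkQ w) ∈
            (I • ⊤ : Submodule A (M ⧸ (I ^ i • ⊤ : Submodule A M))) := by
          refine Submodule.smul_mono_left ?_ (ker_quotProj_le I h hdiff)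
          exact Ideal.pow_le_self (by omega)
        have : (I ^ i • ⊤ : Submodule A M).mkQ x =
            ψ' ((I ^ i • ⊤ : Submodule A M).mkQ w) +
            ((I ^ i • ⊤ : Submodule A M).mkQ x - ψ' ((I ^ i • ⊤ : Submodule A M).mkQ w)) := by
          abel
        rw [this]
        exact Submodule.add_mem_sup (LinearMap.mem_range_self ψ' _) hdiff'
      have := Submodule.le_of_le_smul_of_le_jacobson_bot
        (Module.Finite.fg_top : (⊤ : Submodule A (M ⧸ (I ^ i • ⊤ : Submodule A M))).FG)
        (by rw [hI]; exact IsLocalRing.maximalIdeal_le_jacobson ⊥) hNN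
      exact top_le_iff.mp this
    have hinj : Function.Injective ψ' :=
      IsNoetherian.injective_of_surjective_endomorphism ψ' hsurj
    refine ⟨LinearEquiv.ofBijective ψ' ⟨hinj, hsurj⟩, ?_⟩
    intro x
    obtain ⟨w, rfl⟩ := Submodule.mkQ_surjective _ x
    rw [quotProj_mkQ]
    have : (LinearEquiv.ofBijective ψ' ⟨hinj, hsurj⟩) ((I ^ i • ⊤ : Submodule A M).mkQ w) =
        ψ' ((I ^ i • ⊤ : Submodule A M).mkQ w) := rfl
    rw [this, hψ'apply, hgw]

end Aux2

/-- For a complete Noetherian local ring `A` with maximal ideal `m` and a finitely generated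
`A`-module `M`, the inverse system `(Aut_A(M/m^n M))_{n ≥ 1}` satisfies the
Mittag-Leffler condition. -/
theorem mittagLeffler_aut_quotient {A : Type*} [CommRing A] [IsNoetherianRing A]
    [IsLocalRing A] [IsAdicComplete (IsLocalRing.maximalIdeal A) A]
    {M : Type*} [AddCommGroup M] [Module A M] [Module.Finite A M] :
    ∀ n : ℕ, 1 ≤ n → ∃ N : ℕ, ∃ hN : n ≤ N, ∀ i j : ℕ, ∀ hi : N ≤ i, ∀ hj : N ≤ j,
      autImage (IsLocalRing.maximalIdeal A) M (le_trans hN hi) =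
      autImage (IsLocalRing.maximalIdeal A) M (le_trans hN hj) := by
  intro n hn
  set I := IsLocalRing.maximalIdeal A with hI
  haveI := isArtinian_hom (M := M) I n
  -- the set of all images `homImage I M (h : n ≤ i)` has a minimal element
  obtain ⟨S0, hS0mem, hmin⟩ := IsArtinian.set_has_minimal
    {S : Submodule A (M →ₗ[A] M ⧸ (I ^ n • ⊤ : Submodule A M)) |
      ∃ i, ∃ h : n ≤ i, S = homImage I M h}
    ⟨homImage I M (le_refl n), n, le_refl n, rfl⟩
  obtain ⟨N, hN, rfl⟩ := hS0mem
  refine ⟨N, hN, fun i j hi hj => ?_⟩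
  have key : ∀ k, ∀ hk : N ≤ k, homImage I M (hN.trans hk) = homImage I M hN := by
    intro k hk
    have hle : homImage I M (hN.trans hk) ≤ homImage I M hN := homImage_le I hN hk
    have hnotlt := hmin (homImage I M (hN.trans hk)) ⟨k, hN.trans hk, rfl⟩
    rcases hle.lt_or_eq with hlt | heq
    · exact absurd hlt hnotlt
    · exact heq
  rw [autImage_eq hn (hN.trans hi), autImage_eq hn (hN.trans hj), key i hi, key j hj]
end

section
/- Let A be a complete Noetherian local commutative ring with maximal ideal m, and let M and N be finitely generated A-modules. Suppose that for every n ≥ 1 the quotient modules M/m^n M and N/m^n N are isomorphic as A-modules (no compatibility between the isomorphisms for different n is assumed). Then M and N are isomorphic as A-modules. -/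
open Submodule IsLocalRing

/-- Membership in `I • ⊤` for a pi type can be checked coordinatewise. -/
private lemma pi_mem_smul_top {A : Type*} [CommRing A] {N : Type*} [AddCommGroup N] [Module A N]
    {ι : Type*} [Fintype ι] [DecidableEq ι] (I : Ideal A) (v : ι → N)
    (hv : ∀ i, v i ∈ (I • ⊤ : Submodule A N)) : v ∈ (I • ⊤ : Submodule A (ι → N)) := by
  rw [← Finset.univ_sum_single v]
  refine Submodule.sum_mem _ fun i _ => ?_
  have h1 : (Pi.single i (v i) : ι → N) = LinearMap.single A (fun _ : ι => N) i (v i) := rfl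
  have h2 : LinearMap.single A (fun _ : ι => N) i (v i) ∈
      Submodule.map (LinearMap.single A (fun _ : ι => N) i) (I • ⊤ : Submodule A N) :=
    Submodule.mem_map_of_mem (hv i)
  rw [Submodule.map_smul''] at h2
  rw [h1]
  exact Submodule.smul_mono le_rfl le_top h2

private lemma smul_top_hom_apply {A : Type*} [CommRing A] {P Q : Type*}
    [AddCommGroup P] [Module A P] [AddCommGroup Q] [Module A Q]
    (I : Ideal A) {g : P →ₗ[A] Q} (hg : g ∈ (I • ⊤ : Submodule A (P →ₗ[A] Q))) (x : P) :
    g x ∈ (I • ⊤ : Submodule A Q) := by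
  refine Submodule.smul_induction_on hg (fun r hr f _ => ?_) (fun f g hf hg => ?_)
  · exact Submodule.smul_mem_smul hr trivial
  · simpa using Submodule.add_mem _ hf hg


private lemma artinRees {R : Type*} {M : Type*} [CommRing R] [IsNoetherianRing R]
    [AddCommGroup M] [Module R M] [Module.Finite R M] (I : Ideal R) (N : Submodule R M) :
    ∃ k : ℕ, ∀ n ≥ k, I ^ n • ⊤ ⊓ N = I ^ (n - k) • (I ^ k • ⊤ ⊓ N) := by
  obtain ⟨n₀, p, hp⟩ := Module.Finite.exists_fin' R M
  let e : ((Fin n₀ → R) ⧸ LinearMap.ker p) ≃ₗ[R] M := LinearMap.quotKerEquivOfSurjective p hp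
  set ε : ((Fin n₀ → R) ⧸ LinearMap.ker p) →ₗ[R] M := e.toLinearMap with hε
  have hεs : Function.Surjective ε := e.surjective
  have hεi : Function.Injective ε := e.injective
  obtain ⟨k, hk⟩ := Ideal.exists_pow_inf_eq_pow_smul (R := R)
    (M := (Fin n₀ → R) ⧸ LinearMap.ker p) I (N.comap ε)
  refine ⟨k, fun n hn => ?_⟩
  have h2 := congrArg (Submodule.map ε) (hk n hn)
  have hmapN : (N.comap ε).map ε = N := Submodule.map_comap_eq_of_surjective hεs N
  have htop : Submodule.map ε ⊤ = ⊤ := by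
    rw [Submodule.map_top, LinearMap.range_eq_top]; exact hεs
  rwa [Submodule.map_inf _ hεi, Submodule.map_smul'', htop,
    Submodule.map_smul'', Submodule.map_inf _ hεi, Submodule.map_smul'', htop,
    hmapN] at h2

/-- Key lemma: if for each `n ≥ 1` there is a surjection `M → N/m^n N`, then there is a
surjection `M → N`. -/
private lemma exists_surjective_linearMap {A : Type*} [CommRing A] [IsNoetherianRing A]
    [IsLocalRing A]
    {M : Type*} [AddCommGroup M] [Module A M] [Module.Finite A M]
    {N : Type*} [AddCommGroup N] [Module A N] [Module.Finite A N]
    (h : ∀ n : ℕ, 1 ≤ n → ∃ g : M →ₗ[A] (N ⧸ ((maximalIdeal A) ^ n • ⊤ : Submodule A N)),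
        Function.Surjective g) :
    ∃ f : M →ₗ[A] N, Function.Surjective f := by
  classical
  set m : Ideal A := maximalIdeal A with hm
  -- a finite presentation of M
  obtain ⟨r, π, hπ⟩ := Module.Finite.exists_fin' A M
  set K : Submodule A (Fin r → A) := LinearMap.ker π with hKdef
  obtain ⟨S, hS⟩ : K.FG := IsNoetherian.noetherian K
  -- the evaluation map on generators of K
  set L : ((Fin r → A) →ₗ[A] N) →ₗ[A] (S → N) :=
    LinearMap.pi (fun i => LinearMap.applyₗ (i : Fin r → A)) with hL
  set E : Submodule A (S → N) := LinearMap.range L with hE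
  -- Artin-Rees
  obtain ⟨c, hc⟩ := artinRees m E
  set n : ℕ := c + 1 with hn
  obtain ⟨g, hg⟩ := h n (by omega)
  -- lift g ∘ π to a map g0 : A^r → N
  choose y hy using fun j : Fin r =>
    Submodule.Quotient.mk_surjective ((m ^ n • ⊤ : Submodule A N)) (g (π (Pi.basisFun A (Fin r) j)))
  set g0 : (Fin r → A) →ₗ[A] N := (Pi.basisFun A (Fin r)).constr ℕ y with hg0
  have comm : ∀ x, Submodule.Quotient.mk (g0 x) = g (π x) := by
    have : (((m : Ideal A) ^ n • ⊤ : Submodule A N)).mkQ.comp g0 = g.comp π := by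
      refine (Pi.basisFun A (Fin r)).ext fun j => ?_
      simp only [LinearMap.coe_comp, Function.comp_apply, Submodule.mkQ_apply, hg0,
        Module.Basis.constr_basis]
      exact hy j
    intro x
    have := congrArg (fun φ => φ x) this
    simpa using this
  have hker : ∀ x ∈ K, g0 x ∈ (m ^ n • ⊤ : Submodule A N) := by
    intro x hx
    have : Submodule.Quotient.mk (g0 x) = (0 : N ⧸ (m ^ n • ⊤ : Submodule A N)) := by
      rw [comm x]
      have : π x = 0 := hx
      rw [this, map_zero]
    exact (Submodule.Quotient.mk_eq_zero _).mp this
  -- the element of E given by g0 on generators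
  set u : S → N := fun i => g0 (i : Fin r → A) with hu
  have huE : u ∈ E := ⟨g0, rfl⟩
  have huS : u ∈ (m ^ n • ⊤ : Submodule A (S → N)) := by
    refine pi_mem_smul_top _ _ fun i => ?_
    exact hker _ (by rw [← hS]; exact Submodule.subset_span i.2)
  have hun : u ∈ m ^ (n - c) • (m ^ c • ⊤ ⊓ E) := by
    rw [← hc n (by omega)]; exact ⟨huS, huE⟩
  have hu1 : u ∈ Submodule.map L (m • ⊤ : Submodule A ((Fin r → A) →ₗ[A] N)) := by
    have : u ∈ m • E := by
      have : m ^ (n - c) • (m ^ c • ⊤ ⊓ E) ≤ m • E := by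
        have h1 : (n - c) = 1 := by omega
        rw [h1, pow_one]
        exact Submodule.smul_mono le_rfl inf_le_right
      exact this hun
    rwa [hE, ← Submodule.map_top, ← Submodule.map_smul''] at this
  obtain ⟨δ, hδmem, hδ⟩ := hu1
  -- g1 kills K
  set g1 : (Fin r → A) →ₗ[A] N := g0 - δ with hg1
  have hKle : K ≤ LinearMap.ker g1 := by
    rw [← hS, Submodule.span_le]
    intro s hs
    have := congrArg (fun v => v (⟨s, hs⟩ : S)) hδ
    have hds : δ s = g0 s := by
      simpa [hL, LinearMap.pi_apply, LinearMap.applyₗ_apply_apply, hu] using this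
    have : g1 s = 0 := by rw [hg1]; simp [hds]
    exact this
  -- descend to f : M → N
  set e := LinearMap.quotKerEquivOfSurjective π hπ with he
  set f : M →ₗ[A] N := (K.liftQ g1 hKle).comp (e.symm : M →ₗ[A] ((Fin r → A) ⧸ K)) with hf
  have hfπ : ∀ x, f (π x) = g1 x := by
    intro x
    have h1 : e (Submodule.Quotient.mk x) = π x := by
      simp [he, LinearMap.quotKerEquivOfSurjective, LinearMap.quotKerEquivRange]
    have h2 : e.symm (π x) = Submodule.Quotient.mk x := by
      rw [← h1, LinearEquiv.symm_apply_apply]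
    simp [hf, h2, Submodule.liftQ_apply]
  -- surjectivity modulo m, then Nakayama
  have hrange : ⊤ ≤ LinearMap.range f ⊔ (m • ⊤ : Submodule A N) := by
    intro z _
    obtain ⟨x, hx⟩ := hg (Submodule.Quotient.mk z)
    obtain ⟨a, rfl⟩ := hπ x
    have h1 : g0 a - z ∈ (m ^ n • ⊤ : Submodule A N) := by
      rw [← Submodule.Quotient.eq]
      rw [comm a, hx]
    have h2 : g0 a - z ∈ (m • ⊤ : Submodule A N) := by
      refine Submodule.smul_mono_left ?_ h1
      exact Ideal.pow_le_self (by omega)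
    have h3 : δ a ∈ (m • ⊤ : Submodule A N) := smul_top_hom_apply m hδmem a
    have hz : z = f (π a) + ((z - g0 a) + δ a) := by
      rw [hfπ a]; simp [hg1]
    rw [hz]
    exact Submodule.add_mem _ (Submodule.mem_sup_left ⟨π a, rfl⟩)
      (Submodule.mem_sup_right (Submodule.add_mem _ (by simpa using Submodule.neg_mem _ h2) h3))
  have : (⊤ : Submodule A N) ≤ LinearMap.range f :=
    Submodule.le_of_le_smul_of_le_jacobson_bot Module.Finite.fg_top
      (maximalIdeal_le_jacobson ⊥) hrange
  exact ⟨f, LinearMap.range_eq_top.mp (top_le_iff.mp this)⟩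

/-- Let `A` be a complete Noetherian local commutative ring with maximal ideal `m`, and let
`M`, `N` be finitely generated `A`-modules. If `M/m^n M ≅ N/m^n N` as `A`-modules for every
`n ≥ 1`, then `M ≅ N` as `A`-modules. -/
theorem linearEquiv_of_linearEquiv_quotients {A : Type*} [CommRing A] [IsNoetherianRing A]
    [IsLocalRing A] [IsAdicComplete (IsLocalRing.maximalIdeal A) A]
    {M : Type*} [AddCommGroup M] [Module A M] [Module.Finite A M]
    {N : Type*} [AddCommGroup N] [Module A N] [Module.Finite A N]
    (h : ∀ n : ℕ, 1 ≤ n → Nonempty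
      ((M ⧸ ((IsLocalRing.maximalIdeal A) ^ n • ⊤ : Submodule A M)) ≃ₗ[A]
       (N ⧸ ((IsLocalRing.maximalIdeal A) ^ n • ⊤ : Submodule A N)))) :
    Nonempty (M ≃ₗ[A] N) := by
  obtain ⟨f, hf⟩ := exists_surjective_linearMap (M := M) (N := N) (fun n hn =>
    ⟨((h n hn).some : _ ≃ₗ[A] _).toLinearMap.comp
      ((IsLocalRing.maximalIdeal A ^ n • ⊤ : Submodule A M)).mkQ,
      ((h n hn).some.surjective).comp (Submodule.mkQ_surjective _)⟩)
  obtain ⟨g, hg⟩ := exists_surjective_linearMap (M := N) (N := M) (fun n hn =>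
    ⟨((h n hn).some.symm : _ ≃ₗ[A] _).toLinearMap.comp
      ((IsLocalRing.maximalIdeal A ^ n • ⊤ : Submodule A N)).mkQ,
      ((h n hn).some.symm.surjective).comp (Submodule.mkQ_surjective _)⟩)
  have hinj : Function.Injective f := by
    have hgf : Function.Surjective (g.comp f) := hg.comp hf
    have := OrzechProperty.injective_of_surjective_endomorphism (g.comp f) hgf
    exact Function.Injective.of_comp (f := g) this
  exact ⟨LinearEquiv.ofBijective f ⟨hinj, hf⟩⟩
end

section
/- Let E be a field and let R = E[[x_0, x_1, ..., x_k]] be the ring of formal power series in k+1 variables over E, with maximal ideal 𝔪 = (x_0, ..., x_k). For each l ≥ 0 put R_l = R/𝔪^l. Let a and b be positive integers with a ≤ b, let m ≥ 1, and let d_1, ..., d_m be integers with 0 < d_i < a for all i. Let U be a finitely generated R_b-module and let ξ : U → ⊕_{i=1}^m R_b/(x_0^{d_i}) be a surjective R_b-linear map (where (x_0^{d_i}) denotes the ideal of R_b generated by the image of x_0^{d_i}). Suppose ξ induces an isomorphism after base change to R_a, i.e., the induced map U/𝔪^a U → ⊕_{i=1}^m (R_b/(x_0^{d_i}))/𝔪^a·(R_b/(x_0^{d_i}))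 is bijective. Then ξ is an isomorphism. -/
noncomputable section

/-- The formal power series ring `R = E[[x_0, …, x_k]]` in `k+1` variables over `E`. -/
abbrev PSRing (E : Type*) [Field E] (k : ℕ) : Type _ := MvPowerSeries (Fin (k + 1)) E

/-- The maximal ideal `𝔪 = (x_0, …, x_k)` of `E[[x_0, …, x_k]]`. -/
abbrev psMaxIdeal (E : Type*) [Field E] (k : ℕ) : Ideal (PSRing E k) :=
  Ideal.span (Set.range (MvPowerSeries.X : Fin (k + 1) → PSRing E k))

/-- The truncation `R_l = R/𝔪^l`. -/
abbrev PSQuot (E : Type*) [Field E] (k l : ℕ) : Type _ := PSRing E k ⧸ (psMaxIdeal E k) ^ l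

/-- The image of `𝔪` in `R_b`. -/
abbrev psMaxIdealQuot (E : Type*) [Field E] (k b : ℕ) : Ideal (PSQuot E k b) :=
  (psMaxIdeal E k).map (Ideal.Quotient.mk ((psMaxIdeal E k) ^ b))

section AuxLemmas

set_option synthInstance.maxHeartbeats 1000000
set_option maxHeartbeats 2000000

open MvPowerSeries

variable {E : Type*} [Field E] {k : ℕ}

/-- The ideal of power series whose coefficients vanish below total degree `n`. -/
def degLT (E : Type*) [Field E] (k n : ℕ) : Ideal (PSRing E k) where
  carrier := {f | ∀ s : Fin (k + 1) →₀ ℕ, (∑ i, s i) < n → MvPowerSeries.coeff s f = 0}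
  add_mem' := fun hf hg s hs => by simp [map_add, hf s hs, hg s hs]
  zero_mem' := fun s hs => by simp
  smul_mem' := by
    intro c f hf s hs
    rw [smul_eq_mul, MvPowerSeries.coeff_mul]
    apply Finset.sum_eq_zero
    intro p hp
    have hps : p.1 + p.2 = s := Finset.HasAntidiagonal.mem_antidiagonal.mp hp
    have h2 : (∑ i, p.2 i) < n := by
      have : (∑ i, p.1 i) + (∑ i, p.2 i) = ∑ i, s i := by
        rw [← Finset.sum_add_distrib]
        exact Finset.sum_congr rfl fun i _ => by rw [← hps]; rfl
      omega
    rw [hf p.2 h2, mul_zero]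

theorem mem_degLT {n : ℕ} {f : PSRing E k} :
    f ∈ degLT E k n ↔ ∀ s : Fin (k + 1) →₀ ℕ, (∑ i, s i) < n → MvPowerSeries.coeff s f = 0 :=
  Iff.rfl

theorem mul_mem_degLT {m n : ℕ} {f g : PSRing E k} (hf : f ∈ degLT E k m)
    (hg : g ∈ degLT E k n) : f * g ∈ degLT E k (m + n) := by
  intro s hs
  rw [MvPowerSeries.coeff_mul]
  apply Finset.sum_eq_zero
  intro p hp
  have hps : p.1 + p.2 = s := Finset.HasAntidiagonal.mem_antidiagonal.mp hp
  have hsum : (∑ i, p.1 i) + (∑ i, p.2 i) = ∑ i, s i := by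
    rw [← Finset.sum_add_distrib]
    exact Finset.sum_congr rfl fun i _ => by rw [← hps]; rfl
  rcases lt_or_ge (∑ i, p.1 i) m with h | h
  · rw [hf p.1 h, zero_mul]
  · rw [hg p.2 (by omega), mul_zero]

theorem X_mem_degLT (i : Fin (k + 1)) : (MvPowerSeries.X i : PSRing E k) ∈ degLT E k 1 := by
  intro s hs
  have hs0 : s = 0 := by
    ext j
    have h0 : ∑ i, s i = 0 := by omega
    exact (Finset.sum_eq_zero_iff.mp h0) j (Finset.mem_univ j)
  subst hs0
  rw [MvPowerSeries.coeff_zero_X]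

theorem maxIdeal_pow_le_degLT (n : ℕ) : (psMaxIdeal E k) ^ n ≤ degLT E k n := by
  induction n with
  | zero => intro f _ s hs; omega
  | succ n ih =>
    rw [pow_succ]
    refine Ideal.mul_le.mpr fun r hr s hs => ?_
    have hsm : s ∈ degLT E k 1 := by
      revert hs
      refine fun hs => Ideal.span_le.mpr ?_ hs
      rintro _ ⟨i, rfl⟩
      exact X_mem_degLT i
    exact mul_mem_degLT (ih hr) hsm

theorem mem_maxIdeal_of_constantCoeff_eq_zero {f : PSRing E k}
    (hf : MvPowerSeries.constantCoeff f = 0) : f ∈ psMaxIdeal E k := by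
  classical
  -- define the pieces
  set g : Fin (k + 1) → PSRing E k := fun i s =>
    if ∀ j, j < i → s j = 0 then MvPowerSeries.coeff (s + Finsupp.single i 1) f else 0 with hg
  have key : f = ∑ i, MvPowerSeries.X i * g i := by
    ext t
    rw [map_sum]
    have hterm : ∀ i : Fin (k + 1),
        MvPowerSeries.coeff t (MvPowerSeries.X i * g i)
          = if 1 ≤ t i ∧ ∀ j, j < i → t j = 0 then MvPowerSeries.coeff t f else 0 := by
      intro i
      rw [MvPowerSeries.X, MvPowerSeries.coeff_monomial_mul]
      by_cases hle : Finsupp.single i 1 ≤ t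
      · rw [if_pos hle]
        have hti : 1 ≤ t i := by
          have := hle i; simpa using this
        set t' : Fin (k + 1) →₀ ℕ := t - Finsupp.single i 1 with ht'
        have hcoe : MvPowerSeries.coeff t' (g i)
            = if ∀ j, j < i → t' j = 0
              then MvPowerSeries.coeff (t' + Finsupp.single i 1) f
              else 0 := rfl
        rw [hcoe]
        have hsub : t' + Finsupp.single i 1 = t := tsub_add_cancel_of_le hle
        have happ : ∀ j, j < i → t' j = t j := by
          intro j hj
          rw [ht', Finsupp.tsub_apply, Finsupp.single_apply, if_neg (ne_of_gt hj)]
          omega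
        have hcond : (∀ j, j < i → t' j = 0) ↔ (∀ j, j < i → t j = 0) := by
          apply forall_congr'; intro j
          apply imp_congr_right; intro hj
          rw [happ j hj]
        rw [hsub]
        by_cases hc : ∀ j, j < i → t j = 0
        · rw [if_pos (hcond.mpr hc), if_pos ⟨hti, hc⟩, one_mul]
        · rw [if_neg (fun h => hc (hcond.mp h)), if_neg (fun h => hc h.2), mul_zero]
      · rw [if_neg hle]
        have hti : ¬ (1 ≤ t i) := by
          intro h
          exact hle (by
            intro j
            rw [Finsupp.single_apply]
            split
            · next h' => subst h'; exact h
            · exact Nat.zero_le _)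
        rw [if_neg (fun h => hti h.1)]
    simp only [hterm]
    by_cases ht : t = 0
    · subst ht
      rw [Finset.sum_eq_zero (fun i _ => by rw [if_neg]; rintro ⟨h1, -⟩; simp at h1)]
      simpa [← MvPowerSeries.coeff_zero_eq_constantCoeff] using hf
    · -- least index with t i ≠ 0
      have hne : (Finset.univ.filter fun i => t i ≠ 0).Nonempty := by
        by_contra hcon
        apply ht
        ext j
        rw [Finset.not_nonempty_iff_eq_empty, Finset.filter_eq_empty_iff] at hcon
        have := hcon (Finset.mem_univ j)
        simpa using this
      set i0 := (Finset.univ.filter fun i => t i ≠ 0).min' hne with hi0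
      have hi0mem : t i0 ≠ 0 := by
        have := (Finset.univ.filter fun i => t i ≠ 0).min'_mem hne
        simpa using this
      have hi0min : ∀ j, j < i0 → t j = 0 := by
        intro j hj
        by_contra hjne
        have : i0 ≤ j := Finset.min'_le _ _ (by simpa using hjne)
        omega
      rw [Finset.sum_eq_single i0]
      · rw [if_pos ⟨by omega, hi0min⟩]
      · intro i _ hii
        rw [if_neg]
        rintro ⟨h1, h2⟩
        rcases lt_or_gt_of_ne hii with h | h
        · have := hi0min i h; omega
        · exact hi0mem (h2 i0 h)
      · intro h; exact absurd (Finset.mem_univ i0) h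
  rw [key]
  exact Ideal.sum_mem _ fun i _ =>
    Ideal.mul_mem_right _ _ (Ideal.subset_span ⟨i, rfl⟩)

theorem maxIdeal_pow_le_degLT_apply {E : Type*} [Field E] {k : ℕ} (n : ℕ) (f : PSRing E k)
    (hf : f ∈ (psMaxIdeal E k) ^ n) :
    ∀ s : Fin (k + 1) →₀ ℕ, (∑ i, s i) < n → MvPowerSeries.coeff s f = 0 :=
  maxIdeal_pow_le_degLT n hf

theorem mem_maxIdeal_of_X_pow_mul_mem {f : PSRing E k} {dd a : ℕ} (hda : dd < a)
    (hf : (MvPowerSeries.X 0 : PSRing E k) ^ dd * f ∈ (psMaxIdeal E k) ^ a) :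
    f ∈ psMaxIdeal E k := by
  set c := MvPowerSeries.constantCoeff f with hc
  have hg : f - MvPowerSeries.C c ∈ psMaxIdeal E k :=
    mem_maxIdeal_of_constantCoeff_eq_zero (by simp [← hc])
  by_cases hc0 : c = 0
  · simpa [hc0] using hg
  · exfalso
    have hX : (MvPowerSeries.X 0 : PSRing E k) ^ dd ∈ (psMaxIdeal E k) ^ dd :=
      Ideal.pow_mem_pow (Ideal.subset_span (Set.mem_range_self 0)) dd
    have h1 : (MvPowerSeries.X 0 : PSRing E k) ^ dd * (f - MvPowerSeries.C c)
        ∈ (psMaxIdeal E k) ^ (dd + 1) := by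
      rw [pow_succ]; exact Ideal.mul_mem_mul hX hg
    have h2 : (MvPowerSeries.X 0 : PSRing E k) ^ dd * f ∈ (psMaxIdeal E k) ^ (dd + 1) :=
      Ideal.pow_le_pow_right (by omega) hf
    have h3 : (MvPowerSeries.X 0 : PSRing E k) ^ dd * MvPowerSeries.C c
        ∈ (psMaxIdeal E k) ^ (dd + 1) := by
      have heq : (MvPowerSeries.X 0 : PSRing E k) ^ dd * MvPowerSeries.C c
          = (MvPowerSeries.X 0 : PSRing E k) ^ dd * f
            - (MvPowerSeries.X 0 : PSRing E k) ^ dd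
              * (f - MvPowerSeries.C c) := by ring
      rw [heq]; exact sub_mem h2 h1
    have h4 : (MvPowerSeries.X 0 : PSRing E k) ^ dd ∈ (psMaxIdeal E k) ^ (dd + 1) := by
      have hmul := Ideal.mul_mem_left _ (MvPowerSeries.C c⁻¹) h3
      have heq : MvPowerSeries.C c⁻¹
          * ((MvPowerSeries.X 0 : PSRing E k) ^ dd * MvPowerSeries.C c)
          = (MvPowerSeries.X 0 : PSRing E k) ^ dd := by
        rw [mul_comm ((MvPowerSeries.X 0 : PSRing E k) ^ dd) _, ← mul_assoc, ← map_mul,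
          inv_mul_cancel₀ hc0, map_one, one_mul]
      rwa [heq] at hmul
    have hsum : (∑ i, (Finsupp.single (0 : Fin (k + 1)) dd) i) = dd := by
      simp [Finsupp.single_apply]
    have h5 := maxIdeal_pow_le_degLT_apply (dd + 1) _ h4 (Finsupp.single 0 dd) (by omega)
    rw [MvPowerSeries.coeff_X_pow, if_pos rfl] at h5
    exact one_ne_zero h5

theorem mem_smul_span_of_mem_inter {a b dd : ℕ} (hda : dd < a) (hab : a ≤ b)
    {r : PSQuot E k b}
    (hr1 : r ∈ Ideal.span {Ideal.Quotient.mk ((psMaxIdeal E k) ^ b)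
      ((MvPowerSeries.X 0) ^ dd)})
    (hr2 : r ∈ (psMaxIdealQuot E k b) ^ a) :
    r ∈ psMaxIdealQuot E k b • Ideal.span {Ideal.Quotient.mk ((psMaxIdeal E k) ^ b)
      ((MvPowerSeries.X 0) ^ dd)} := by
  rw [Ideal.mem_span_singleton'] at hr1
  obtain ⟨t, ht⟩ := hr1
  obtain ⟨f, rfl⟩ := Ideal.Quotient.mk_surjective t
  rw [← Ideal.map_pow] at hr2
  obtain ⟨g, hg, hgr⟩ := (Ideal.mem_map_iff_of_surjective _ Ideal.Quotient.mk_surjective).mp hr2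
  have hsub : f * (MvPowerSeries.X 0) ^ dd - g ∈ (psMaxIdeal E k) ^ b := by
    rw [← Ideal.Quotient.eq]
    rw [map_mul] at *
    rw [ht, ← hgr]
  have hmem : (MvPowerSeries.X 0 : PSRing E k) ^ dd * f ∈ (psMaxIdeal E k) ^ a := by
    have heq : (MvPowerSeries.X 0 : PSRing E k) ^ dd * f
        = (f * (MvPowerSeries.X 0) ^ dd - g) + g := by ring
    rw [heq]
    exact add_mem (Ideal.pow_le_pow_right hab hsub) hg
  have hfm : f ∈ psMaxIdeal E k := mem_maxIdeal_of_X_pow_mul_mem hda hmem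
  have hr : r = Ideal.Quotient.mk ((psMaxIdeal E k) ^ b) f
      • Ideal.Quotient.mk ((psMaxIdeal E k) ^ b) ((MvPowerSeries.X 0) ^ dd) := by
    rw [smul_eq_mul, ← ht]
  rw [hr]
  exact Submodule.smul_mem_smul (Ideal.mem_map_of_mem _ hfm) (Ideal.subset_span rfl)

theorem nak_aux {R M : Type*} [CommRing R] [AddCommGroup M] [Module R M]
    (I : Ideal R) (n : ℕ) (hI : I ^ n = ⊥) (N P : Submodule R M) (h : P ≤ N ⊔ I • P) :
    P ≤ N := by
  have key : ∀ j : ℕ, P ≤ N ⊔ I ^ j • P := by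
    intro j
    induction j with
    | zero => rw [pow_zero, Ideal.one_eq_top, Submodule.top_smul]; exact le_sup_right
    | succ j ih =>
      refine ih.trans (sup_le le_sup_left ?_)
      refine (Submodule.smul_mono le_rfl h).trans ?_
      rw [Submodule.smul_sup]
      refine sup_le (Submodule.smul_le_right.trans le_sup_left) ?_
      have heq : I ^ j • (I • P) = I ^ (j + 1) • P := by
        rw [pow_succ, ← Ideal.smul_eq_mul, Submodule.smul_assoc]
      rw [heq]
      exact le_sup_right
  have := key n
  rwa [hI, Submodule.bot_smul, sup_bot_eq] at this

end AuxLemmas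

set_option synthInstance.maxHeartbeats 1000000 in
set_option maxHeartbeats 2000000 in
/-- Let `R = E[[x_0, …, x_k]]` with maximal ideal `𝔪`, `R_l = R/𝔪^l`, let `0 < a ≤ b`,
`m ≥ 1`, and `0 < d_i < a` for all `i`.  If `ξ : U → ⊕_{i=1}^m R_b/(x_0^{d_i})` is a
surjective map of finitely generated `R_b`-modules inducing an isomorphism after base change
to `R_a` (i.e. modulo `𝔪^a`), then `ξ` is an isomorphism. -/
theorem bijective_of_bijective_modulo {E : Type*} [Field E] (k a b m : ℕ)
    (ha : 0 < a) (hab : a ≤ b) (hm : 0 < m) (d : Fin m → ℕ)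
    (hd0 : ∀ i, 0 < d i) (hda : ∀ i, d i < a)
    (U : Type*) [AddCommGroup U] [Module (PSQuot E k b) U] [Module.Finite (PSQuot E k b) U]
    (ξ : U →ₗ[PSQuot E k b]
      (Π i : Fin m, (PSQuot E k b) ⧸
        (Ideal.span {Ideal.Quotient.mk ((psMaxIdeal E k) ^ b)
          ((MvPowerSeries.X 0) ^ (d i))} : Ideal (PSQuot E k b))))
    (hsurj : Function.Surjective ξ)
    (hbij : Function.Bijective
      (@Submodule.mapQ (PSQuot E k b) U _ _ _ ((psMaxIdealQuot E k b) ^ a • ⊤) (PSQuot E k b)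
        (Π i : Fin m, (PSQuot E k b) ⧸
          (Ideal.span {Ideal.Quotient.mk ((psMaxIdeal E k) ^ b)
            ((MvPowerSeries.X 0) ^ (d i))} : Ideal (PSQuot E k b))) _ Pi.addCommGroup
        (@Pi.module (Fin m) (fun i : Fin m => (PSQuot E k b) ⧸
          (Ideal.span {Ideal.Quotient.mk ((psMaxIdeal E k) ^ b)
            ((MvPowerSeries.X 0) ^ (d i))} : Ideal (PSQuot E k b))) (PSQuot E k b) _ (fun _ => inferInstance) (fun _ => inferInstance))
        (RingHom.id _) ((psMaxIdealQuot E k b) ^ a • ⊤) ξ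
        (by
          letI := @Pi.module (Fin m) (fun i : Fin m => (PSQuot E k b) ⧸
              (Ideal.span {Ideal.Quotient.mk ((psMaxIdeal E k) ^ b)
                ((MvPowerSeries.X 0) ^ (d i))} : Ideal (PSQuot E k b))) (PSQuot E k b) _ (fun _ => inferInstance)
            (fun _ => inferInstance)
          rw [← Submodule.map_le_iff_le_comap, Submodule.map_smul'']
          exact Submodule.smul_mono le_rfl le_top))) :
    Function.Bijective ξ := by
  classical
  set Rb := PSQuot E k b with hRb
  set J : Fin m → Ideal Rb := fun i =>
    Ideal.span {Ideal.Quotient.mk ((psMaxIdeal E k) ^ b) ((MvPowerSeries.X 0) ^ (d i))} with hJdef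
  set I : Ideal Rb := psMaxIdealQuot E k b with hIdef
  -- nilpotency
  have hIb : I ^ b = ⊥ := by
    rw [hIdef, ← Ideal.map_pow, Ideal.map_quotient_self]
  have hIab : (I ^ a) ^ b = ⊥ := by
    rw [show (I ^ a) ^ b = I ^ (a * b) from (pow_mul I a b).symm]
    refine le_bot_iff.mp ?_
    calc I ^ (a * b) ≤ I ^ b := Ideal.pow_le_pow_right (Nat.le_mul_of_pos_left b ha)
    _ = ⊥ := hIb
  -- Step A : kernel is inside 𝔪^a U
  have hK : LinearMap.ker ξ ≤ (I ^ a) • (⊤ : Submodule Rb U) := by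
    intro u hu
    have h0 : Submodule.Quotient.mk (p := (I ^ a) • (⊤ : Submodule Rb U)) u = 0 := by
      apply hbij.1
      rw [map_zero]
      simp [LinearMap.mem_ker.mp hu]
    exact (Submodule.Quotient.mk_eq_zero _).mp h0
  -- generators
  choose uu huu using fun i => hsurj (Pi.single i 1)
  let π : (Fin m → Rb) →ₗ[Rb] U :=
    { toFun := fun c => ∑ i, c i • uu i
      map_add' := by intro c c'; simp [add_smul, Finset.sum_add_distrib]
      map_smul' := by intro r c; simp [Finset.smul_sum, smul_smul] }
  have hξπ : ∀ (c : Fin m → Rb) (i' : Fin m),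
      ξ (π c) i' = Submodule.Quotient.mk (c i') := by
    intro c i'
    have h1 : ξ (π c) = ∑ i, c i • ξ (uu i) := by
      show ξ (∑ i, c i • uu i) = _
      rw [map_sum]
      exact Finset.sum_congr rfl fun i _ => map_smul ξ _ _
    rw [h1, Finset.sum_apply]
    rw [Finset.sum_eq_single i']
    · rw [huu i', Pi.smul_apply, Pi.single_eq_same]
      rw [show (1 : Rb ⧸ J i') = Submodule.Quotient.mk 1 from rfl,
        ← Submodule.Quotient.mk_smul, smul_eq_mul, mul_one]
    · intro i _ hii
      rw [huu i, Pi.smul_apply, Pi.single_eq_of_ne (Ne.symm hii), smul_zero]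
    · intro h; exact absurd (Finset.mem_univ i') h
  -- surjectivity of π
  have hrange : (⊤ : Submodule Rb U) ≤ LinearMap.range π ⊔ (I ^ a) • ⊤ := by
    intro x _
    choose c hc using fun i => Ideal.Quotient.mk_surjective (I := J i) (ξ x i)
    have hxc : x - π c ∈ LinearMap.ker ξ := by
      rw [LinearMap.mem_ker, map_sub]
      refine (sub_eq_zero (G := Π i : Fin m, Rb ⧸ J i)).mpr ?_
      ext i
      rw [hξπ c i]
      exact (hc i).symm
    have hmem := Submodule.add_mem_sup (LinearMap.mem_range_self π c) (hK hxc)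
    rwa [add_sub_cancel] at hmem
  have hπsurj : Function.Surjective π := by
    rw [← LinearMap.range_eq_top]
    exact top_le_iff.mp (nak_aux (I ^ a) b hIab _ _ hrange)
  -- the module of relations
  set M : Submodule Rb (Fin m → Rb) :=
    Submodule.pi Set.univ (fun i => (J i : Submodule Rb Rb)) with hMdef
  have hNM : LinearMap.ker π ≤ M := by
    intro c hc
    rw [hMdef, Submodule.mem_pi]
    intro i _
    have h0 : ξ (π c) i = 0 := by
      rw [LinearMap.mem_ker.mp hc, map_zero, Pi.zero_apply]
    rw [hξπ c i] at h0
    exact (Submodule.Quotient.mk_eq_zero _).mp h0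
  have hMk : ∀ c ∈ M, π c ∈ LinearMap.ker ξ := by
    intro c hc
    rw [LinearMap.mem_ker]
    ext i
    rw [hξπ c i, Pi.zero_apply]
    exact (Submodule.Quotient.mk_eq_zero _).mpr (Submodule.mem_pi.mp hc i trivial)
  -- Step B : M ≤ ker π ⊔ I • M
  have hMle : M ≤ LinearMap.ker π ⊔ I • M := by
    intro c hc
    have h1 : π c ∈ (I ^ a) • (⊤ : Submodule Rb U) := hK (hMk c hc)
    have h2 : (I ^ a) • (⊤ : Submodule Rb U)
        = Submodule.map π ((I ^ a) • (⊤ : Submodule Rb (Fin m → Rb))) := by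
      rw [Submodule.map_smul'', Submodule.map_top, LinearMap.range_eq_top.mpr hπsurj]
    rw [h2] at h1
    obtain ⟨c', hc', hcc⟩ := h1
    have hker : c - c' ∈ LinearMap.ker π := by
      rw [LinearMap.mem_ker, map_sub, hcc, sub_self]
    have hc'M : c' ∈ M := by
      have hsub := sub_mem hc (hNM hker)
      simpa using hsub
    have hc'I : ∀ i, c' i ∈ I ^ a := by
      have hle : (I ^ a) • (⊤ : Submodule Rb (Fin m → Rb))
          ≤ Submodule.pi Set.univ (fun _ => ((I ^ a : Ideal Rb) : Submodule Rb Rb)) := by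
        refine Submodule.smul_le.mpr ?_
        intro r hr x _
        rw [Submodule.mem_pi]
        intro i _
        exact Ideal.mul_mem_right _ _ hr
      intro i
      exact Submodule.mem_pi.mp (hle hc') i trivial
    have hc'IM : c' ∈ I • M := by
      have hsingle : ∀ i : Fin m, Pi.single i (c' i) ∈ I • M := by
        intro i
        have hmem : c' i ∈ I • (J i : Submodule Rb Rb) :=
          mem_smul_span_of_mem_inter (hda i) hab (Submodule.mem_pi.mp hc'M i trivial) (hc'I i)
        have hmap := Submodule.mem_map_of_mem
          (f := LinearMap.single Rb (fun _ : Fin m => Rb) i) hmem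
        rw [Submodule.map_smul''] at hmap
        refine Submodule.smul_mono le_rfl ?_ hmap
        rw [Submodule.map_le_iff_le_comap]
        intro y hy
        rw [Submodule.mem_comap, Submodule.mem_pi]
        intro i' _
        by_cases h : i' = i
        · subst h
          simpa [LinearMap.single_apply] using hy
        · simp [LinearMap.single_apply, Pi.single_eq_of_ne h]
      have hsum : c' = ∑ i, Pi.single i (c' i) := (Finset.univ_sum_single c').symm
      rw [hsum]
      exact Submodule.sum_mem _ fun i _ => hsingle i
    have := Submodule.add_mem_sup hker hc'IM
    rwa [sub_add_cancel] at this
  have hMN : M ≤ LinearMap.ker π := nak_aux I b hIb _ _ hMle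
  refine ⟨?_, hsurj⟩
  refine (injective_iff_map_eq_zero ξ).mpr fun x hx' => ?_
  have hx : x ∈ LinearMap.ker ξ := hx'
  obtain ⟨c, rfl⟩ := hπsurj x
  have hcM : c ∈ M := by
    rw [hMdef, Submodule.mem_pi]
    intro i _
    have h0 : ξ (π c) i = 0 := by
      rw [LinearMap.mem_ker.mp hx, Pi.zero_apply]
    rw [hξπ c i] at h0
    exact (Submodule.Quotient.mk_eq_zero _).mp h0
  have := LinearMap.mem_ker.mp (hMN hcM)
  simp [this]
end
end

section
/- Let G be a group and let G⁻ be a subset of G that is closed under the group multiplication (i.e., G⁻ is a subsemigroup of G). Suppose that for every g ∈ G there exist u_1, v_1, u_2, v_2 ∈ G⁻ such that g = u_1 v_1^{-1} and g = v_2^{-1} u_2. Then for every group H, every multiplicative map f : G⁻ → H (i.e., f(xy) = f(x)f(y) for all x, y ∈ G⁻) extends uniquely to a group homomorphism G → H. -/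
/-- Let `G` be a group and `S = G⁻` a subset of `G` closed under multiplication, such that
every `g ∈ G` can be written both as `u₁ * v₁⁻¹` and as `v₂⁻¹ * u₂` with
`u₁, v₁, u₂, v₂ ∈ S`.  Then every multiplicative map `f : S → H` into a group `H` extends
uniquely to a group homomorphism `G →* H`. -/
theorem extend_hom_of_subsemigroup {G H : Type*} [Group G] [Group H] (S : Set G)
    (hSmul : ∀ x ∈ S, ∀ y ∈ S, x * y ∈ S)
    (hSdense : ∀ g : G, ∃ u₁ ∈ S, ∃ v₁ ∈ S, ∃ u₂ ∈ S, ∃ v₂ ∈ S,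
      g = u₁ * v₁⁻¹ ∧ g = v₂⁻¹ * u₂)
    (f : S → H)
    (hf : ∀ x y : S, f ⟨(x : G) * y, hSmul x x.2 y y.2⟩ = f x * f y) :
    ∃! F : G →* H, ∀ x : S, F x = f x := by
  classical
  have hfmul : ∀ (x y : G) (hx : x ∈ S) (hy : y ∈ S),
      f ⟨x * y, hSmul x hx y hy⟩ = f ⟨x, hx⟩ * f ⟨y, hy⟩ := fun x y hx hy => hf ⟨x, hx⟩ ⟨y, hy⟩
  -- key : well-definedness of fractions
  have key : ∀ (a b c d : G) (ha : a ∈ S) (hb : b ∈ S) (hc : c ∈ S) (hd : d ∈ S),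
      a * b⁻¹ = c * d⁻¹ → f ⟨a, ha⟩ * (f ⟨b, hb⟩)⁻¹ = f ⟨c, hc⟩ * (f ⟨d, hd⟩)⁻¹ := by
    intro a b c d ha hb hc hd h
    obtain ⟨p, hp, q, hq, _, _, _, _, hpq, -⟩ := hSdense (c⁻¹ * a)
    have hdb : d⁻¹ * b = p * q⁻¹ := by
      have h' : c⁻¹ * a = d⁻¹ * b := by
        have := congrArg (fun z => c⁻¹ * z * b) h
        simpa [mul_assoc] using this
      rw [← h']; exact hpq
    have h1 : a * q = c * p := by
      have := congrArg (fun z => c * z * q) hpq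
      simpa [mul_assoc] using this
    have h2 : b * q = d * p := by
      have := congrArg (fun z => d * z * q) hdb
      simpa [mul_assoc] using this
    have e1 : f ⟨a, ha⟩ * f ⟨q, hq⟩ = f ⟨c, hc⟩ * f ⟨p, hp⟩ := by
      rw [← hfmul a q ha hq, ← hfmul c p hc hp]
      exact congrArg f (Subtype.ext h1)
    have e2 : f ⟨b, hb⟩ * f ⟨q, hq⟩ = f ⟨d, hd⟩ * f ⟨p, hp⟩ := by
      rw [← hfmul b q hb hq, ← hfmul d p hd hp]
      exact congrArg f (Subtype.ext h2)
    have : f ⟨a, ha⟩ * (f ⟨b, hb⟩)⁻¹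
        = (f ⟨a, ha⟩ * f ⟨q, hq⟩) * (f ⟨b, hb⟩ * f ⟨q, hq⟩)⁻¹ := by group
    rw [this, e1, e2]; group
  have hSd := hSdense
  choose u hu v hv u₂ hu₂ v₂ hv₂ hrep hrep2 using hSdense
  set F0 : G → H := fun g => f ⟨u g, hu g⟩ * (f ⟨v g, hv g⟩)⁻¹ with hF0
  have hmul : ∀ g₁ g₂ : G, F0 (g₁ * g₂) = F0 g₁ * F0 g₂ := by
    intro g₁ g₂
    obtain ⟨p, hp, q, hq, _, _, _, _, hpq, -⟩ := hSd ((v g₁)⁻¹ * u g₂)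
    have hgg : g₁ * g₂ = (u g₁ * p) * (v g₂ * q)⁻¹ := by
      conv_lhs => rw [hrep g₁, hrep g₂]
      rw [show u g₁ * (v g₁)⁻¹ * (u g₂ * (v g₂)⁻¹)
          = u g₁ * ((v g₁)⁻¹ * u g₂) * (v g₂)⁻¹ by group, hpq]
      group
    have hk := key (u (g₁ * g₂)) (v (g₁ * g₂)) (u g₁ * p) (v g₂ * q)
      (hu _) (hv _) (hSmul _ (hu g₁) _ hp) (hSmul _ (hv g₂) _ hq)
      ((hrep (g₁ * g₂)).symm.trans hgg)
    have e : f ⟨u g₂, hu g₂⟩ * f ⟨q, hq⟩ = f ⟨v g₁, hv g₁⟩ * f ⟨p, hp⟩ := by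
      rw [← hfmul _ _ (hu g₂) hq, ← hfmul _ _ (hv g₁) hp]
      refine congrArg f (Subtype.ext ?_)
      have := congrArg (fun z => v g₁ * z * q) hpq
      simpa [mul_assoc] using this
    have e' : f ⟨p, hp⟩ = (f ⟨v g₁, hv g₁⟩)⁻¹ * f ⟨u g₂, hu g₂⟩ * f ⟨q, hq⟩ := by
      rw [mul_assoc, e]; group
    show F0 (g₁ * g₂) = F0 g₁ * F0 g₂
    rw [hF0]
    simp only []
    rw [hk, hfmul _ _ (hu g₁) hp, hfmul _ _ (hv g₂) hq, e']
    group
  set F : G →* H := MonoidHom.mk' F0 hmul with hF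
  have hext : ∀ x : S, F x = f x := by
    intro x
    have h1 : (x : G) * v x = u x := by
      have := congrArg (fun z => z * v (x : G)) (hrep (x : G))
      simpa [mul_assoc] using this
    have e1 : f x * f ⟨v (x : G), hv _⟩ = f ⟨u (x : G), hu _⟩ := by
      rw [← hfmul _ _ x.2 (hv _)]
      refine congrArg f (Subtype.ext ?_)
      exact h1
    show F0 (x : G) = f x
    rw [hF0]
    simp only []
    rw [← e1]
    group
  refine ⟨F, hext, ?_⟩
  intro F' hF'
  ext g
  have : F' g = F' (u g) * (F' (v g))⁻¹ := by
    conv_lhs => rw [hrep g]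
    rw [map_mul, map_inv]
  rw [this, hF' ⟨u g, hu g⟩, hF' ⟨v g, hv g⟩]
  rfl
end
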